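/- (Transitivity-type counting lemma) For distinct goods i, j, k, if u ≥ 2t − 1, |i ≻ j| ≥ u, and |k ≻ j| < t, then |i ≻ k| ≥ t. -/

import Mathlib

structure MenuProblem (N G : Type) where
  pref : N → List G
  nodup : ∀ i, (pref i).Nodup

namespace MenuProblem

variable {N G : Type} [Fintype N] [DecidableEq G]

/-- The good assigned to agent `i` when menu `O` is offered:
its favorite ranked good in `O`, if any. -/
def assigned (P : MenuProblem N G) (O : Finset G) (i : N) : Option G :=
  (P.pref i).find? (fun a => decide (a ∈ O))

/-- Number of agents assigned to good `j` when menu `O` is offered. -/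
def assignedCount (P : MenuProblem N G) (O : Finset G) (j : G) : ℕ :=
  (Finset.univ.filter (fun i => P.assigned O i = some j)).card

/-- The lobby for a good `j` against menu `O`: the number of agents that
would take `j` if it were added to the menu. -/
def lobby (P : MenuProblem N G) (O : Finset G) (j : G) : ℕ :=
  P.assignedCount (insert j O) j

/-- `|a ≻ b|`: the number of agents that would take `a` from the menu `{a, b}`. -/
def prefCount (P : MenuProblem N G) (a b : G) : ℕ :=
  P.assignedCount {a, b} a

/-- A menu is `t`-feasible if every offered good is assigned at least `t` agents. -/
def TFeasible (P : MenuProblem N G) (O : Finset G) (t : ℕ) : Prop :=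
  ∀ j ∈ O, t ≤ P.assignedCount O j

/-- A menu is `u`-uncontestable if no unoffered good has a lobby of at least `u` agents. -/
def UUncontestable (P : MenuProblem N G) (O : Finset G) (u : ℕ) : Prop :=
  ∀ j ∉ O, P.lobby O j < u

/-- A menu is `(t,u)`-stable if it is `t`-feasible and `u`-uncontestable. -/
def Stable (P : MenuProblem N G) (O : Finset G) (t u : ℕ) : Prop :=
  P.TFeasible O t ∧ P.UUncontestable O u

end MenuProblem

lemma find?_trans {G : Type} [DecidableEq G] (i j k : G) (hij : i ≠ j) (hik : i ≠ k)
    (hjk : j ≠ k) (l : List G)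
    (h1 : l.find? (fun a => decide (a ∈ ({i, j} : Finset G))) = some i)
    (h2 : l.find? (fun a => decide (a ∈ ({k, j} : Finset G))) ≠ some k) :
    l.find? (fun a => decide (a ∈ ({i, k} : Finset G))) = some i := by
  induction l with
  | nil => simp at h1
  | cons x xs ih =>
    by_cases hxi : x = i
    · subst hxi
      rw [List.find?_cons_of_pos (by simp)]
    by_cases hxj : x = j
    · subst hxj
      rw [List.find?_cons_of_pos (by simp)] at h1
      exact absurd h1.symm (by simpa using hij)
    by_cases hxk : x = k
    · subst hxk
      rw [List.find?_cons_of_pos (by simp)] at h2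
      simp at h2
    · rw [List.find?_cons_of_neg (by simp [hxi, hxj])] at h1
      rw [List.find?_cons_of_neg (by simp [hxk, hxj])] at h2
      rw [List.find?_cons_of_neg (by simp [hxi, hxk])]
      exact ih h1 h2
/-- Transitivity-type counting lemma: for distinct goods `i, j, k`, if `u ≥ 2t − 1`,
`|i ≻ j| ≥ u`, and `|k ≻ j| < t`, then `|i ≻ k| ≥ t`. -/
theorem transitivity_counting (n g t u : ℕ) (P : MenuProblem (Fin n) (Fin g))
    (i j k : Fin g) (hij : i ≠ j) (hik : i ≠ k) (hjk : j ≠ k)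
    (htu : 2 * t - 1 ≤ u)
    (h1 : u ≤ P.prefCount i j) (h2 : P.prefCount k j < t) :
    t ≤ P.prefCount i k := by
  rcases Nat.eq_zero_or_pos t with ht | ht
  · simp [ht]
  set A := Finset.univ.filter (fun a : Fin n => P.assigned {i, j} a = some i) with hA
  set B := Finset.univ.filter (fun a : Fin n => P.assigned {k, j} a = some k) with hB
  set C := Finset.univ.filter (fun a : Fin n => P.assigned {i, k} a = some i) with hC
  have hsub : A \ B ⊆ C := by
    intro a ha
    rw [Finset.mem_sdiff, hA, hB, Finset.mem_filter, Finset.mem_filter] at ha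
    rw [hC, Finset.mem_filter]
    refine ⟨Finset.mem_univ _, ?_⟩
    exact find?_trans i j k hij hik hjk _ ha.1.2 (fun h => ha.2 ⟨Finset.mem_univ _, h⟩)
  have h3 : A.card ≤ (A \ B).card + B.card := Finset.card_le_card_sdiff_add_card
  have h4 : (A \ B).card ≤ C.card := Finset.card_le_card hsub
  have hu : u ≤ A.card := h1
  have hb : B.card < t := h2
  have hc : P.prefCount i k = C.card := rfl
  omega
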